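/- Let n ≥ 3, f ≥ 1, h ≥ 1, k ≥ 1 and s, m ≥ 0 be integers with m ≥ h + k. Then, with g = 0, p(n,s,m,f=,0=,h=,k=) = Σ_{y ∈ Y} w(f,0,h;y) · [ p(n−yf, s, m−y(h+k), f=, 0=, h=, min{m−y(h+k), k−1}≤) + p(n−yf, s, m−y(h+k), f=, 0=, min{m−y(h+k), h−1}≤, (m−y(h+k))≤) + p(n−yf, s, m−y(h+k), min{n−yf−1, f−1}≤, s≤, (m−y(h+k))≤, (m−y(h+k))≤) ]. (Paper's Lemma 2(vii).) -/

import Mathlib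

/-- Rooted tree-like multigraph (list-based representative): a root carrying a
self-loop count together with a list of children, each child being a pair of an
edge multiplicity (number of multiple edges, i.e. copies beyond the first, of the
edge joining the root to the child's root) and a rooted tree-like multigraph. -/
inductive PreRTM : Type where
  | node : ℕ → List (ℕ × PreRTM) → PreRTM

namespace PreRTM

/-- self-loop count of the root -/
def loops : PreRTM → ℕ
  | .node l _ => l

/-- the children of the root -/
def children : PreRTM → List (ℕ × PreRTM)
  | .node _ cs => cs

/-- number of vertices -/
def vcount : PreRTM → ℕ
  | .node _ cs => 1 + (cs.attach.map (fun c => vcount c.1.2)).sum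
decreasing_by
  rcases c with ⟨⟨e, Q⟩, hc⟩
  have h1 := List.sizeOf_lt_of_mem hc
  simp only [Prod.mk.sizeOf_spec, PreRTM.node.sizeOf_spec] at *
  omega

/-- total number of self-loops -/
def scount : PreRTM → ℕ
  | .node l cs => l + (cs.attach.map (fun c => scount c.1.2)).sum
decreasing_by
  rcases c with ⟨⟨e, Q⟩, hc⟩
  have h1 := List.sizeOf_lt_of_mem hc
  simp only [Prod.mk.sizeOf_spec, PreRTM.node.sizeOf_spec] at *
  omega

/-- total number of multiple edges -/
def ecount : PreRTM → ℕ
  | .node _ cs => (cs.attach.map (fun c => c.1.1 + ecount c.1.2)).sum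
decreasing_by
  rcases c with ⟨⟨e, Q⟩, hc⟩
  have h1 := List.sizeOf_lt_of_mem hc
  simp only [Prod.mk.sizeOf_spec, PreRTM.node.sizeOf_spec] at *
  omega

/-- Max_v: maximum number of vertices in a descendant subtree of the root (0 if none) -/
def maxV (P : PreRTM) : ℕ :=
  (P.children.map (fun c => c.2.vcount)).foldr max 0

/-- Max_s: maximum number of self-loops among descendant subtrees with `vcount = maxV` -/
def maxS (P : PreRTM) : ℕ :=
  (((P.children.filter (fun c => c.2.vcount == P.maxV)).map (fun c => c.2.scount)).foldr max 0)

/-- Max_m: maximum number of multiple edges among descendant subtrees with `vcount = maxV` -/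
def maxM (P : PreRTM) : ℕ :=
  (((P.children.filter (fun c => c.2.vcount == P.maxV)).map (fun c => c.2.ecount)).foldr max 0)

/-- Max_l: maximum multiplicity of the root edge among descendant subtrees with
`vcount = maxV` and `ecount = maxM` -/
def maxL (P : PreRTM) : ℕ :=
  (((P.children.filter (fun c => c.2.vcount == P.maxV && c.2.ecount == P.maxM)).map
      (fun c => c.1)).foldr max 0)

mutual
  /-- root-preserving isomorphism: equal root self-loop counts and equal multisets of children -/
  inductive REquiv : PreRTM → PreRTM → Prop where
    | node (l : ℕ) {cs cs' : List (ℕ × PreRTM)} :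
        LEquiv cs cs' → REquiv (.node l cs) (.node l cs')
  /-- lists of children agree as multisets, up to `REquiv` of the subtrees -/
  inductive LEquiv : List (ℕ × PreRTM) → List (ℕ × PreRTM) → Prop where
    | nil : LEquiv [] []
    | cons {e : ℕ} {P Q : PreRTM} {l₁ l₂ : List (ℕ × PreRTM)} :
        REquiv P Q → LEquiv l₁ l₂ → LEquiv ((e, P) :: l₁) ((e, Q) :: l₂)
    | swap (a b : ℕ × PreRTM) (l : List (ℕ × PreRTM)) : LEquiv (a :: b :: l) (b :: a :: l)
    | trans {l₁ l₂ l₃ : List (ℕ × PreRTM)} : LEquiv l₁ l₂ → LEquiv l₂ l₃ → LEquiv l₁ l₃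
end

end PreRTM

/-- Rooted tree-like multigraphs, up to root-preserving isomorphism. -/
def RTM : Type := Quot PreRTM.REquiv

/-- the isomorphism class of a representative -/
def cls (P : PreRTM) : RTM := Quot.mk PreRTM.REquiv P

namespace PreRTM

/-- `P` has `n` vertices, `s` self-loops and `m` multiple edges -/
def memP (n s m : ℤ) (P : PreRTM) : Prop :=
  (P.vcount : ℤ) = n ∧ (P.scount : ℤ) = s ∧ (P.ecount : ℤ) = m

/-- membership in 𝒫(n,s,m,f≤,g≤,h≤,k≤) -/
def memLLLL (n s m f g h k : ℤ) (P : PreRTM) : Prop :=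
  memP n s m P ∧ (P.maxV : ℤ) ≤ f ∧ (P.maxS : ℤ) ≤ g ∧ (P.maxM : ℤ) ≤ h ∧ (P.maxL : ℤ) ≤ k

/-- membership in 𝒫(n,s,m,f=,g≤,h≤,k≤) -/
def memELLL (n s m f g h k : ℤ) (P : PreRTM) : Prop :=
  memLLLL n s m f g h k P ∧ (P.maxV : ℤ) = f

/-- membership in 𝒫(n,s,m,f=,g=,h≤,k≤) -/
def memEELL (n s m f g h k : ℤ) (P : PreRTM) : Prop :=
  memELLL n s m f g h k P ∧ (P.maxS : ℤ) = g

/-- membership in 𝒫(n,s,m,f=,g=,h=,k≤) -/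
def memEEEL (n s m f g h k : ℤ) (P : PreRTM) : Prop :=
  memEELL n s m f g h k P ∧ (P.maxM : ℤ) = h

/-- membership in 𝒫(n,s,m,f=,g=,h=,k=) -/
def memEEEE (n s m f g h k : ℤ) (P : PreRTM) : Prop :=
  memEEEL n s m f g h k P ∧ (P.maxL : ℤ) = k

end PreRTM

/-- the family 𝒫(n,s,m,f≤,g≤,h≤,k≤) of isomorphism classes -/
def famLLLL (n s m f g h k : ℤ) : Set RTM := cls '' {P | P.memLLLL n s m f g h k}
/-- the family 𝒫(n,s,m,f=,g≤,h≤,k≤) of isomorphism classes -/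
def famELLL (n s m f g h k : ℤ) : Set RTM := cls '' {P | P.memELLL n s m f g h k}
/-- the family 𝒫(n,s,m,f=,g=,h≤,k≤) of isomorphism classes -/
def famEELL (n s m f g h k : ℤ) : Set RTM := cls '' {P | P.memEELL n s m f g h k}
/-- the family 𝒫(n,s,m,f=,g=,h=,k≤) of isomorphism classes -/
def famEEEL (n s m f g h k : ℤ) : Set RTM := cls '' {P | P.memEEEL n s m f g h k}
/-- the family 𝒫(n,s,m,f=,g=,h=,k=) of isomorphism classes -/
def famEEEE (n s m f g h k : ℤ) : Set RTM := cls '' {P | P.memEEEE n s m f g h k}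

/-- p(n,s,m,f≤,g≤,h≤,k≤) -/
noncomputable def pLLLL (n s m f g h k : ℤ) : ℕ := (famLLLL n s m f g h k).ncard
/-- p(n,s,m,f=,g≤,h≤,k≤) -/
noncomputable def pELLL (n s m f g h k : ℤ) : ℕ := (famELLL n s m f g h k).ncard
/-- p(n,s,m,f=,g=,h≤,k≤) -/
noncomputable def pEELL (n s m f g h k : ℤ) : ℕ := (famEELL n s m f g h k).ncard
/-- p(n,s,m,f=,g=,h=,k≤) -/
noncomputable def pEEEL (n s m f g h k : ℤ) : ℕ := (famEEEL n s m f g h k).ncard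
/-- p(n,s,m,f=,g=,h=,k=) -/
noncomputable def pEEEE (n s m f g h k : ℤ) : ℕ := (famEEEE n s m f g h k).ncard

/-- w(f,g,h;z) = C(p(f,g,h,(f−1)≤,g≤,h≤,h≤) + z − 1, z) -/
noncomputable def w (f g h : ℤ) (z : ℕ) : ℕ :=
  (pLLLL f g h (f - 1) g h h + z - 1).choose z

/-- the index set Y : integers y with 1 ≤ y ≤ ⌊(n−1)/f⌋, additionally y ≤ ⌊s/g⌋ when g ≥ 1
and y ≤ ⌊m/(h+k)⌋ when h+k ≥ 1 -/
noncomputable def Yset (n s m f g h k : ℤ) : Finset ℤ :=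
  (Finset.Icc 1 ((n - 1) / f)).filter
    (fun y => (1 ≤ g → y ≤ s / g) ∧ (1 ≤ h + k → y ≤ m / (h + k)))

namespace PreRTM

theorem vcount_node (l : ℕ) (cs : List (ℕ × PreRTM)) :
    vcount (.node l cs) = 1 + (cs.map (fun c => c.2.vcount)).sum := by
  rw [vcount, List.attach_map_val (l := cs) (f := fun c => c.2.vcount)]

theorem scount_node (l : ℕ) (cs : List (ℕ × PreRTM)) :
    scount (.node l cs) = l + (cs.map (fun c => c.2.scount)).sum := by
  rw [scount, List.attach_map_val (l := cs) (f := fun c => c.2.scount)]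

theorem ecount_node (l : ℕ) (cs : List (ℕ × PreRTM)) :
    ecount (.node l cs) = (cs.map (fun c => c.1 + c.2.ecount)).sum := by
  rw [ecount, List.attach_map_val (l := cs) (f := fun c => c.1 + c.2.ecount)]

/-- the "key" of a child: multiplicity, vcount, scount, ecount -/
def key (c : ℕ × PreRTM) : ℕ × ℕ × ℕ × ℕ := (c.1, c.2.vcount, c.2.scount, c.2.ecount)

theorem vcount_eq_of (P Q : PreRTM) (hl : P.loops = Q.loops)
    (hk : (P.children.map key).Perm (Q.children.map key)) : P.vcount = Q.vcount := by
  cases P with | node l cs => cases Q with | node l' cs' =>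
  simp only [children] at hk
  rw [vcount_node, vcount_node]
  have : ∀ (cs : List (ℕ × PreRTM)),
      cs.map (fun c => c.2.vcount) = (cs.map key).map (fun x => x.2.1) := by
    intro cs; rw [List.map_map]; rfl
  rw [this, this, (hk.map (fun x => x.2.1)).sum_eq]

theorem scount_eq_of (P Q : PreRTM) (hl : P.loops = Q.loops)
    (hk : (P.children.map key).Perm (Q.children.map key)) : P.scount = Q.scount := by
  cases P with | node l cs => cases Q with | node l' cs' =>
  simp only [children] at hk
  simp only [loops] at hl
  rw [scount_node, scount_node, hl]
  have : ∀ (cs : List (ℕ × PreRTM)),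
      cs.map (fun c => c.2.scount) = (cs.map key).map (fun x => x.2.2.1) := by
    intro cs; rw [List.map_map]; rfl
  rw [this, this, (hk.map (fun x => x.2.2.1)).sum_eq]

theorem ecount_eq_of (P Q : PreRTM) (hl : P.loops = Q.loops)
    (hk : (P.children.map key).Perm (Q.children.map key)) : P.ecount = Q.ecount := by
  cases P with | node l cs => cases Q with | node l' cs' =>
  simp only [children] at hk
  rw [ecount_node, ecount_node]
  have : ∀ (cs : List (ℕ × PreRTM)),
      cs.map (fun c => c.1 + c.2.ecount) = (cs.map key).map (fun x => x.1 + x.2.2.2) := by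
    intro cs; rw [List.map_map]; rfl
  rw [this, this, (hk.map (fun x => x.1 + x.2.2.2)).sum_eq]

/-- main invariance: equivalent trees have equal loops and permutation-equal child keys -/
theorem requiv_inv : ∀ {P Q : PreRTM}, REquiv P Q →
    P.loops = Q.loops ∧ (P.children.map key).Perm (Q.children.map key) := by
  intro P Q h
  refine REquiv.rec (motive_1 := fun P Q _ =>
      P.loops = Q.loops ∧ (P.children.map key).Perm (Q.children.map key))
    (motive_2 := fun l₁ l₂ _ => (l₁.map key).Perm (l₂.map key)) ?_ ?_ ?_ ?_ ?_ h
  · intro l cs cs' _ ih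
    exact ⟨rfl, ih⟩
  · exact List.Perm.refl _
  · intro e P Q l₁ l₂ _ _ ih1 ih2
    have hk : key (e, P) = key (e, Q) := by
      simp only [key]
      rw [vcount_eq_of P Q ih1.1 ih1.2, scount_eq_of P Q ih1.1 ih1.2,
        ecount_eq_of P Q ih1.1 ih1.2]
    simp only [List.map_cons]
    rw [hk]
    exact ih2.cons _
  · intro a b l
    simp only [List.map_cons]
    exact List.Perm.swap _ _ _
  · intro l₁ l₂ l₃ _ _ ih1 ih2
    exact ih1.trans ih2

theorem vcount_inv {P Q : PreRTM} (h : REquiv P Q) : P.vcount = Q.vcount :=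
  vcount_eq_of P Q (requiv_inv h).1 (requiv_inv h).2
theorem scount_inv {P Q : PreRTM} (h : REquiv P Q) : P.scount = Q.scount :=
  scount_eq_of P Q (requiv_inv h).1 (requiv_inv h).2
theorem ecount_inv {P Q : PreRTM} (h : REquiv P Q) : P.ecount = Q.ecount :=
  ecount_eq_of P Q (requiv_inv h).1 (requiv_inv h).2
theorem loops_inv {P Q : PreRTM} (h : REquiv P Q) : P.loops = Q.loops := (requiv_inv h).1

theorem foldr_max_perm {l₁ l₂ : List ℕ} (h : l₁.Perm l₂) :
    l₁.foldr max 0 = l₂.foldr max 0 := by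
  induction h with
  | nil => rfl
  | cons x _ ih => simp [List.foldr_cons, ih]
  | swap x y l => simp only [List.foldr_cons]; rw [← max_assoc, ← max_assoc, max_comm y x]
  | trans _ _ ih1 ih2 => rw [ih1, ih2]

theorem maxV_eq_of {P Q : PreRTM}
    (hk : (P.children.map key).Perm (Q.children.map key)) : P.maxV = Q.maxV := by
  unfold maxV
  have : ∀ (R : PreRTM), R.children.map (fun c => c.2.vcount)
      = (R.children.map key).map (fun x => x.2.1) := by
    intro R; rw [List.map_map]; rfl
  rw [this, this]
  exact foldr_max_perm (hk.map _)

theorem filter_key_perm {P Q : PreRTM} (p : ℕ × ℕ × ℕ × ℕ → Bool)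
    (hk : (P.children.map key).Perm (Q.children.map key)) :
    ((P.children.filter (fun c => p (key c))).map key).Perm
      ((Q.children.filter (fun c => p (key c))).map key) := by
  have h := hk.filter p
  rw [List.filter_map, List.filter_map] at h
  simpa [Function.comp_def] using h

theorem maxS_eq_of {P Q : PreRTM}
    (hk : (P.children.map key).Perm (Q.children.map key)) : P.maxS = Q.maxS := by
  unfold maxS
  rw [maxV_eq_of hk]
  have h2 := filter_key_perm (fun x => x.2.1 == Q.maxV) hk
  have : ∀ (R : PreRTM), (R.children.filter (fun c => c.2.vcount == Q.maxV)).map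
      (fun c => c.2.scount) = ((R.children.filter (fun c => (fun x => x.2.1 == Q.maxV) (key c))).map key).map (fun x => x.2.2.1) := by
    intro R; rw [List.map_map]; rfl
  rw [this, this]
  exact foldr_max_perm (h2.map _)

theorem maxM_eq_of {P Q : PreRTM}
    (hk : (P.children.map key).Perm (Q.children.map key)) : P.maxM = Q.maxM := by
  unfold maxM
  rw [maxV_eq_of hk]
  have h2 := filter_key_perm (fun x => x.2.1 == Q.maxV) hk
  have : ∀ (R : PreRTM), (R.children.filter (fun c => c.2.vcount == Q.maxV)).map
      (fun c => c.2.ecount) = ((R.children.filter (fun c => (fun x => x.2.1 == Q.maxV) (key c))).map key).map (fun x => x.2.2.2) := by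
    intro R; rw [List.map_map]; rfl
  rw [this, this]
  exact foldr_max_perm (h2.map _)

theorem maxL_eq_of {P Q : PreRTM}
    (hk : (P.children.map key).Perm (Q.children.map key)) : P.maxL = Q.maxL := by
  unfold maxL
  rw [maxV_eq_of hk, maxM_eq_of hk]
  have h2 := filter_key_perm (fun x => x.2.1 == Q.maxV && x.2.2.2 == Q.maxM) hk
  have : ∀ (R : PreRTM), (R.children.filter (fun c => c.2.vcount == Q.maxV && c.2.ecount == Q.maxM)).map
      (fun c => c.1) = ((R.children.filter (fun c => (fun x => x.2.1 == Q.maxV && x.2.2.2 == Q.maxM) (key c))).map key).map (fun x => x.1) := by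
    intro R; rw [List.map_map]; rfl
  rw [this, this]
  exact foldr_max_perm (h2.map _)

theorem maxV_inv {P Q : PreRTM} (h : REquiv P Q) : P.maxV = Q.maxV :=
  maxV_eq_of (requiv_inv h).2
theorem maxS_inv {P Q : PreRTM} (h : REquiv P Q) : P.maxS = Q.maxS :=
  maxS_eq_of (requiv_inv h).2
theorem maxM_inv {P Q : PreRTM} (h : REquiv P Q) : P.maxM = Q.maxM :=
  maxM_eq_of (requiv_inv h).2
theorem maxL_inv {P Q : PreRTM} (h : REquiv P Q) : P.maxL = Q.maxL :=
  maxL_eq_of (requiv_inv h).2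

end PreRTM
namespace PreRTM

mutual
  theorem requiv_refl : ∀ P : PreRTM, REquiv P P
    | .node l cs => .node l (lequiv_refl cs)
  theorem lequiv_refl : ∀ l : List (ℕ × PreRTM), LEquiv l l
    | [] => .nil
    | (e, P) :: t => .cons (requiv_refl P) (lequiv_refl t)
end

theorem requiv_symm : ∀ {P Q : PreRTM}, REquiv P Q → REquiv Q P := by
  intro P Q h
  refine REquiv.rec (motive_1 := fun P Q _ => REquiv Q P)
    (motive_2 := fun l₁ l₂ _ => LEquiv l₂ l₁) ?_ ?_ ?_ ?_ ?_ h
  · intro l cs cs' _ ih; exact .node l ih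
  · exact .nil
  · intro e P Q l₁ l₂ _ _ ih1 ih2; exact .cons ih1 ih2
  · intro a b l; exact .swap b a l
  · intro l₁ l₂ l₃ _ _ ih1 ih2; exact .trans ih2 ih1

theorem requiv_trans : ∀ {P Q R : PreRTM}, REquiv P Q → REquiv Q R → REquiv P R := by
  intro P Q R h1 h2
  cases h1 with | node l hl1 =>
  cases h2 with | node _ hl2 =>
  exact .node l (hl1.trans hl2)

theorem requiv_equivalence : Equivalence REquiv :=
  ⟨requiv_refl, requiv_symm, fun h1 h2 => requiv_trans h1 h2⟩

theorem lequiv_of_perm : ∀ {l₁ l₂ : List (ℕ × PreRTM)}, l₁.Perm l₂ → LEquiv l₁ l₂ := by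
  intro l₁ l₂ h
  induction h with
  | nil => exact .nil
  | cons x _ ih => exact .cons (requiv_refl _) ih
  | swap x y l => exact .swap _ _ _
  | trans _ _ ih1 ih2 => exact .trans ih1 ih2

end PreRTM

namespace RTM

theorem cls_eq {P Q : PreRTM} (h : PreRTM.REquiv P Q) : cls P = cls Q := Quot.sound h

theorem cls_exact {P Q : PreRTM} (h : cls P = cls Q) : PreRTM.REquiv P Q := by
  have := Quot.eq.1 h
  rwa [PreRTM.requiv_equivalence.eqvGen_eq] at this

/-- the child map into the quotient -/
def pi (c : ℕ × PreRTM) : ℕ × RTM := (c.1, cls c.2)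

theorem lequiv_of_map_eq : ∀ (l₁ l₂ : List (ℕ × PreRTM)),
    (l₁.map pi : Multiset (ℕ × RTM)) = (l₂.map pi : Multiset (ℕ × RTM)) →
    PreRTM.LEquiv l₁ l₂ := by
  classical
  intro l₁
  induction l₁ with
  | nil =>
    intro l₂ h
    cases l₂ with
    | nil => exact .nil
    | cons b t =>
      rw [List.map_cons, ← Multiset.cons_coe] at h
      exact absurd h.symm (Multiset.cons_ne_zero)
  | cons a t ih =>
    intro l₂ h
    have hmem : pi a ∈ l₂.map pi := by
      have : pi a ∈ (l₂.map pi : Multiset (ℕ × RTM)) := by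
        rw [← h]; simp
      simpa using this
    obtain ⟨b, hb, hab⟩ := List.mem_map.1 hmem
    obtain ⟨l₂e, hperm⟩ : ∃ l, l₂.Perm (b :: l) := ⟨_, List.perm_cons_erase hb⟩
    have h2 : ((b :: l₂e).map pi : Multiset (ℕ × RTM)) = (l₂.map pi : Multiset (ℕ × RTM)) := by
      exact_mod_cast Quot.sound ((hperm.map pi).symm)
    rw [← h2] at h
    simp only [List.map_cons, ← Multiset.cons_coe] at h
    rw [← hab] at h
    have h3 : (t.map pi : Multiset (ℕ × RTM)) = (l₂e.map pi : Multiset (ℕ × RTM)) :=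
      (Multiset.cons_inj_right _).1 h
    simp only [pi, Prod.mk.injEq] at hab
    have hR : PreRTM.REquiv a.2 b.2 := cls_exact hab.2.symm
    have he : a.1 = b.1 := hab.1.symm
    have step : PreRTM.LEquiv (a :: t) (b :: l₂e) := by
      obtain ⟨a1, a2⟩ := a
      obtain ⟨b1, b2⟩ := b
      simp only at he hR
      subst he
      exact .cons hR (ih _ h3)
    exact step.trans (PreRTM.lequiv_of_perm hperm.symm)

end RTM
namespace RTM

def vcount : RTM → ℕ := Quot.lift PreRTM.vcount (fun _ _ h => PreRTM.vcount_inv h)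
def scount : RTM → ℕ := Quot.lift PreRTM.scount (fun _ _ h => PreRTM.scount_inv h)
def ecount : RTM → ℕ := Quot.lift PreRTM.ecount (fun _ _ h => PreRTM.ecount_inv h)
def loops : RTM → ℕ := Quot.lift PreRTM.loops (fun _ _ h => PreRTM.loops_inv h)
def maxV : RTM → ℕ := Quot.lift PreRTM.maxV (fun _ _ h => PreRTM.maxV_inv h)
def maxS : RTM → ℕ := Quot.lift PreRTM.maxS (fun _ _ h => PreRTM.maxS_inv h)
def maxM : RTM → ℕ := Quot.lift PreRTM.maxM (fun _ _ h => PreRTM.maxM_inv h)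
def maxL : RTM → ℕ := Quot.lift PreRTM.maxL (fun _ _ h => PreRTM.maxL_inv h)

theorem childm_aux2 : ∀ {l₁ l₂ : List (ℕ × PreRTM)}, PreRTM.LEquiv l₁ l₂ →
    ((l₁.map pi : List (ℕ × RTM)) : Multiset (ℕ × RTM))
      = ((l₂.map pi : List (ℕ × RTM)) : Multiset (ℕ × RTM)) := by
  intro l₁ l₂ h
  refine PreRTM.LEquiv.rec (motive_1 := fun _ _ _ => True)
    (motive_2 := fun l₁ l₂ _ => ((l₁.map pi : List (ℕ × RTM)) : Multiset (ℕ × RTM))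
      = ((l₂.map pi : List (ℕ × RTM)) : Multiset (ℕ × RTM))) ?_ ?_ ?_ ?_ ?_ h
  · intro _ _ _ _ _; trivial
  · rfl
  · intro e P Q l₁ l₂ hR _ _ ih
    simp only [List.map_cons, ← Multiset.cons_coe]
    rw [ih]
    congr 1
    simp only [pi]
    exact Prod.ext rfl (Quot.sound hR)
  · intro a b l
    simp only [List.map_cons, ← Multiset.cons_coe]
    exact Multiset.cons_swap _ _ _
  · intro l₁ l₂ l₃ _ _ ih1 ih2; rw [ih1, ih2]

theorem childm_aux : ∀ {P Q : PreRTM}, PreRTM.REquiv P Q →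
    ((P.children.map pi : List (ℕ × RTM)) : Multiset (ℕ × RTM))
      = ((Q.children.map pi : List (ℕ × RTM)) : Multiset (ℕ × RTM)) := by
  intro P Q h
  cases h with | node l hl =>
  exact childm_aux2 hl

/-- the multiset of children (with multiplicities) of the root, as classes -/
def childm : RTM → Multiset (ℕ × RTM) :=
  Quot.lift (fun P => ((P.children.map pi : List (ℕ × RTM)) : Multiset (ℕ × RTM)))
    (fun _ _ h => childm_aux h)

/-- build an RTM from a loop count and a multiset of children -/
noncomputable def mk (l : ℕ) (M : Multiset (ℕ × RTM)) : RTM :=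
  cls (.node l ((M.map (fun c => (c.1, Quot.out c.2))).toList))

@[simp] theorem loops_mk (l : ℕ) (M : Multiset (ℕ × RTM)) : (mk l M).loops = l := rfl

@[simp] theorem childm_mk (l : ℕ) (M : Multiset (ℕ × RTM)) : (mk l M).childm = M := by
  show ((((M.map (fun c => (c.1, Quot.out c.2))).toList).map pi : List (ℕ × RTM)) : Multiset _) = M
  rw [← Multiset.map_coe, Multiset.coe_toList, Multiset.map_map]
  have : ∀ c : ℕ × RTM, (pi ∘ fun c => (c.1, Quot.out c.2)) c = c := by
    intro c
    simp only [Function.comp, pi]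
    exact Prod.ext rfl (Quot.out_eq c.2)
  rw [Multiset.map_congr rfl (fun c _ => this c), Multiset.map_id']

theorem eq_iff (t u : RTM) : t = u ↔ t.loops = u.loops ∧ t.childm = u.childm := by
  constructor
  · rintro rfl; exact ⟨rfl, rfl⟩
  · induction t using Quot.ind with | _ P =>
    induction u using Quot.ind with | _ Q =>
    rintro ⟨h1, h2⟩
    cases P with | node lp csp =>
    cases Q with | node lq csq =>
    have hl : lp = lq := h1
    subst hl
    exact Quot.sound (.node lp (lequiv_of_map_eq _ _ h2))

theorem eta (t : RTM) : mk t.loops t.childm = t := by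
  rw [eq_iff]
  exact ⟨rfl, childm_mk _ _⟩

/- structure formulas -/
theorem vcount_eq (t : RTM) : t.vcount = 1 + (t.childm.map (fun c => c.2.vcount)).sum := by
  induction t using Quot.ind with | _ P =>
  cases P with | node l cs =>
  show PreRTM.vcount _ = 1 + _
  rw [PreRTM.vcount_node]
  congr 1
  show _ = (((cs.map pi : List (ℕ × RTM)) : Multiset _).map (fun c : ℕ × RTM => c.2.vcount)).sum
  rw [← Multiset.map_coe, Multiset.map_map, ← Multiset.sum_coe, ← Multiset.map_coe]
  rfl

theorem scount_eq (t : RTM) : t.scount = t.loops + (t.childm.map (fun c => c.2.scount)).sum := by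
  induction t using Quot.ind with | _ P =>
  cases P with | node l cs =>
  show PreRTM.scount _ = _ + _
  rw [PreRTM.scount_node]
  congr 1
  show _ = (((cs.map pi : List (ℕ × RTM)) : Multiset _).map (fun c : ℕ × RTM => c.2.scount)).sum
  rw [← Multiset.map_coe, Multiset.map_map, ← Multiset.sum_coe, ← Multiset.map_coe]
  rfl

theorem ecount_eq (t : RTM) : t.ecount = (t.childm.map (fun c => c.1 + c.2.ecount)).sum := by
  induction t using Quot.ind with | _ P =>
  cases P with | node l cs =>
  show PreRTM.ecount _ = _
  rw [PreRTM.ecount_node]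
  show _ = (((cs.map pi : List (ℕ × RTM)) : Multiset _).map (fun c : ℕ × RTM => c.1 + c.2.ecount)).sum
  rw [← Multiset.map_coe, Multiset.map_map, ← Multiset.sum_coe, ← Multiset.map_coe]
  rfl

theorem foldr_max_eq_sup (l : List ℕ) : l.foldr max 0 = (l : Multiset ℕ).sup := by
  induction l with
  | nil => rfl
  | cons a t ih =>
    simp only [List.foldr_cons, ← Multiset.cons_coe, Multiset.sup_cons, ih]

theorem maxV_eq (t : RTM) : t.maxV = (t.childm.map (fun c => c.2.vcount)).sup := by
  induction t using Quot.ind with | _ P =>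
  cases P with | node l cs =>
  show PreRTM.maxV _ = _
  rw [PreRTM.maxV, foldr_max_eq_sup]
  show (((cs.map (fun c => c.2.vcount) : List ℕ) : Multiset ℕ)).sup =
      (Multiset.map (fun c : ℕ × RTM => c.2.vcount) ((cs.map pi : List (ℕ × RTM)) : Multiset _)).sup
  rw [Multiset.map_coe, List.map_map]
  rfl

end RTM
namespace RTM

theorem filtered_sup_eq (cs : List (ℕ × PreRTM)) (pB : ℕ × PreRTM → Bool)
    (p : ℕ × RTM → Prop) [DecidablePred p]
    (hp : ∀ c, pB c = decide (p (pi c))) (gN : ℕ × PreRTM → ℕ) (g : ℕ × RTM → ℕ)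
    (hg : ∀ c, gN c = g (pi c)) :
    ((cs.filter pB).map gN).foldr max 0
      = ((((cs.map pi : List (ℕ × RTM)) : Multiset _).filter p).map g).sup := by
  rw [foldr_max_eq_sup]
  rw [Multiset.filter_coe]
  rw [List.filter_map]
  rw [Multiset.map_coe, List.map_map]
  congr 1
  rw [List.filter_congr (q := (fun a => decide (p a)) ∘ pi) (fun x _ => hp x)]
  exact congrArg _ (List.map_congr_left (fun x _ => hg x))

theorem maxS_eq (t : RTM) :
    t.maxS = ((t.childm.filter (fun c => c.2.vcount = t.maxV)).map (fun c => c.2.scount)).sup := by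
  induction t using Quot.ind with | _ P =>
  cases P with | node l cs =>
  show PreRTM.maxS _ = _
  rw [PreRTM.maxS]
  exact filtered_sup_eq cs _ _ (fun c => by rw [Bool.eq_iff_iff]; simp only [Bool.and_eq_true, beq_iff_eq, decide_eq_true_eq]; exact Iff.rfl) _ _ (fun c => rfl)

theorem maxM_eq (t : RTM) :
    t.maxM = ((t.childm.filter (fun c => c.2.vcount = t.maxV)).map (fun c => c.2.ecount)).sup := by
  induction t using Quot.ind with | _ P =>
  cases P with | node l cs =>
  show PreRTM.maxM _ = _
  rw [PreRTM.maxM]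
  exact filtered_sup_eq cs _ _ (fun c => by rw [Bool.eq_iff_iff]; simp only [Bool.and_eq_true, beq_iff_eq, decide_eq_true_eq]; exact Iff.rfl) _ _ (fun c => rfl)

theorem maxL_eq (t : RTM) :
    t.maxL = ((t.childm.filter (fun c => c.2.vcount = t.maxV ∧ c.2.ecount = t.maxM)).map
      (fun c => c.1)).sup := by
  induction t using Quot.ind with | _ P =>
  cases P with | node l cs =>
  show PreRTM.maxL _ = _
  rw [PreRTM.maxL]
  exact filtered_sup_eq cs _ _ (fun c => by rw [Bool.eq_iff_iff]; simp only [Bool.and_eq_true, beq_iff_eq, decide_eq_true_eq]; exact Iff.rfl) _ _ (fun c => rfl)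

end RTM
namespace RTM

theorem sup_mem {s : Multiset ℕ} (h : s ≠ 0) : s.sup ∈ s := by
  induction s using Multiset.induction with
  | empty => exact absurd rfl h
  | cons a t ih =>
    rw [Multiset.sup_cons]
    rcases eq_or_ne t 0 with rfl | ht
    · simp
    · rcases le_total a t.sup with h1 | h1
      · rw [sup_eq_right.2 h1]; exact Multiset.mem_cons_of_mem (ih ht)
      · rw [sup_eq_left.2 h1]; exact Multiset.mem_cons_self _ _

theorem sup_le_sum (s : Multiset ℕ) : s.sup ≤ s.sum :=
  Multiset.sup_le.2 (fun _ hx => Multiset.single_le_sum (fun _ _ => Nat.zero_le _) _ hx)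

theorem one_le_vcount (t : RTM) : 1 ≤ t.vcount := by
  rw [vcount_eq]; omega

theorem vcount_child_le {t : RTM} {c : ℕ × RTM} (hc : c ∈ t.childm) :
    c.2.vcount ≤ t.maxV := by
  rw [maxV_eq]
  exact Multiset.le_sup (Multiset.mem_map_of_mem _ hc)

theorem scount_child_le {t : RTM} {c : ℕ × RTM} (hc : c ∈ t.childm)
    (hv : c.2.vcount = t.maxV) : c.2.scount ≤ t.maxS := by
  rw [maxS_eq]
  refine Multiset.le_sup (Multiset.mem_map_of_mem _ ?_)
  rw [Multiset.mem_filter]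
  exact ⟨hc, hv⟩

theorem ecount_child_le {t : RTM} {c : ℕ × RTM} (hc : c ∈ t.childm)
    (hv : c.2.vcount = t.maxV) : c.2.ecount ≤ t.maxM := by
  rw [maxM_eq]
  refine Multiset.le_sup (Multiset.mem_map_of_mem _ ?_)
  rw [Multiset.mem_filter]
  exact ⟨hc, hv⟩

theorem mult_child_le {t : RTM} {c : ℕ × RTM} (hc : c ∈ t.childm)
    (hv : c.2.vcount = t.maxV) (he : c.2.ecount = t.maxM) : c.1 ≤ t.maxL := by
  rw [maxL_eq]
  refine Multiset.le_sup (Multiset.mem_map_of_mem _ ?_)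
  rw [Multiset.mem_filter]
  exact ⟨hc, hv, he⟩

theorem attain_maxL {t : RTM} (h : t.maxL ≠ 0) :
    ∃ c ∈ t.childm, c.2.vcount = t.maxV ∧ c.2.ecount = t.maxM ∧ c.1 = t.maxL := by
  have h2 : ((t.childm.filter (fun c => c.2.vcount = t.maxV ∧ c.2.ecount = t.maxM)).map
      (fun c => c.1)) ≠ 0 := by
    intro h0
    rw [maxL_eq, h0] at h
    exact h rfl
  have h3 := sup_mem h2
  rw [← maxL_eq] at h3
  obtain ⟨c, hc, hc2⟩ := Multiset.mem_map.1 h3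
  obtain ⟨hc3, hc4, hc5⟩ := Multiset.mem_filter.1 hc
  exact ⟨c, hc3, hc4, hc5, hc2⟩

theorem maxV_le (t : RTM) : t.maxV + 1 ≤ t.vcount := by
  rw [maxV_eq, vcount_eq]
  have := sup_le_sum (t.childm.map (fun c => c.2.vcount))
  omega

theorem maxS_le (t : RTM) : t.maxS ≤ t.scount := by
  rw [maxS_eq, scount_eq]
  refine le_trans ?_ (Nat.le_add_left _ _)
  refine Multiset.sup_le.2 (fun x hx => ?_)
  obtain ⟨c, hc, rfl⟩ := Multiset.mem_map.1 hx
  exact Multiset.single_le_sum (fun _ _ => Nat.zero_le _) _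
    (Multiset.mem_map_of_mem _ (Multiset.mem_of_mem_filter hc))

theorem maxM_le (t : RTM) : t.maxM ≤ t.ecount := by
  rw [maxM_eq, ecount_eq]
  refine Multiset.sup_le.2 (fun x hx => ?_)
  obtain ⟨c, hc, rfl⟩ := Multiset.mem_map.1 hx
  have hc' : c ∈ t.childm := Multiset.mem_of_mem_filter hc
  calc c.2.ecount ≤ c.1 + c.2.ecount := Nat.le_add_left _ _
  _ ≤ _ := Multiset.single_le_sum (fun _ _ => Nat.zero_le _) _
    (Multiset.mem_map_of_mem (f := fun c : ℕ × RTM => c.1 + c.2.ecount) hc')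

theorem maxL_le (t : RTM) : t.maxL ≤ t.ecount := by
  rw [maxL_eq, ecount_eq]
  refine Multiset.sup_le.2 (fun x hx => ?_)
  obtain ⟨c, hc, rfl⟩ := Multiset.mem_map.1 hx
  have hc' : c ∈ t.childm := Multiset.mem_of_mem_filter hc
  calc c.1 ≤ c.1 + c.2.ecount := Nat.le_add_right _ _
  _ ≤ _ := Multiset.single_le_sum (fun _ _ => Nat.zero_le _) _
    (Multiset.mem_map_of_mem (f := fun c : ℕ × RTM => c.1 + c.2.ecount) hc')

end RTM
namespace RTM

theorem mem_famLLLL {n s m f g h k : ℤ} {t : RTM} :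
    t ∈ famLLLL n s m f g h k ↔ (((t.vcount : ℤ) = n ∧ (t.scount : ℤ) = s ∧ (t.ecount : ℤ) = m) ∧
      (t.maxV : ℤ) ≤ f ∧ (t.maxS : ℤ) ≤ g ∧ (t.maxM : ℤ) ≤ h ∧ (t.maxL : ℤ) ≤ k) := by
  constructor
  · rintro ⟨P, hP, rfl⟩; exact hP
  · intro h
    refine ⟨t.out, ?_, Quot.out_eq t⟩
    rw [← Quot.out_eq t] at h
    exact h

theorem mem_famELLL {n s m f g h k : ℤ} {t : RTM} :
    t ∈ famELLL n s m f g h k ↔ ((((t.vcount : ℤ) = n ∧ (t.scount : ℤ) = s ∧ (t.ecount : ℤ) = m) ∧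
      (t.maxV : ℤ) ≤ f ∧ (t.maxS : ℤ) ≤ g ∧ (t.maxM : ℤ) ≤ h ∧ (t.maxL : ℤ) ≤ k) ∧
      (t.maxV : ℤ) = f) := by
  constructor
  · rintro ⟨P, hP, rfl⟩; exact hP
  · intro h
    refine ⟨t.out, ?_, Quot.out_eq t⟩
    rw [← Quot.out_eq t] at h
    exact h

theorem mem_famEELL {n s m f g h k : ℤ} {t : RTM} :
    t ∈ famEELL n s m f g h k ↔ (((((t.vcount : ℤ) = n ∧ (t.scount : ℤ) = s ∧ (t.ecount : ℤ) = m) ∧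
      (t.maxV : ℤ) ≤ f ∧ (t.maxS : ℤ) ≤ g ∧ (t.maxM : ℤ) ≤ h ∧ (t.maxL : ℤ) ≤ k) ∧
      (t.maxV : ℤ) = f) ∧ (t.maxS : ℤ) = g) := by
  constructor
  · rintro ⟨P, hP, rfl⟩; exact hP
  · intro h
    refine ⟨t.out, ?_, Quot.out_eq t⟩
    rw [← Quot.out_eq t] at h
    exact h

theorem mem_famEEEL {n s m f g h k : ℤ} {t : RTM} :
    t ∈ famEEEL n s m f g h k ↔ ((((((t.vcount : ℤ) = n ∧ (t.scount : ℤ) = s ∧ (t.ecount : ℤ) = m) ∧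
      (t.maxV : ℤ) ≤ f ∧ (t.maxS : ℤ) ≤ g ∧ (t.maxM : ℤ) ≤ h ∧ (t.maxL : ℤ) ≤ k) ∧
      (t.maxV : ℤ) = f) ∧ (t.maxS : ℤ) = g) ∧ (t.maxM : ℤ) = h) := by
  constructor
  · rintro ⟨P, hP, rfl⟩; exact hP
  · intro h
    refine ⟨t.out, ?_, Quot.out_eq t⟩
    rw [← Quot.out_eq t] at h
    exact h

theorem mem_famEEEE {n s m f g h k : ℤ} {t : RTM} :
    t ∈ famEEEE n s m f g h k ↔ (((((((t.vcount : ℤ) = n ∧ (t.scount : ℤ) = s ∧ (t.ecount : ℤ) = m) ∧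
      (t.maxV : ℤ) ≤ f ∧ (t.maxS : ℤ) ≤ g ∧ (t.maxM : ℤ) ≤ h ∧ (t.maxL : ℤ) ≤ k) ∧
      (t.maxV : ℤ) = f) ∧ (t.maxS : ℤ) = g) ∧ (t.maxM : ℤ) = h) ∧ (t.maxL : ℤ) = k) := by
  constructor
  · rintro ⟨P, hP, rfl⟩; exact hP
  · intro h
    refine ⟨t.out, ?_, Quot.out_eq t⟩
    rw [← Quot.out_eq t] at h
    exact h

end RTM

/- ℕ-level descriptions -/

theorem famEEEE_eq (N S M F H K : ℕ) :
    famEEEE (N : ℤ) (S : ℤ) (M : ℤ) (F : ℤ) 0 (H : ℤ) (K : ℤ) =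
      {t : RTM | (t.vcount = N ∧ t.scount = S ∧ t.ecount = M) ∧
        t.maxV = F ∧ t.maxS = 0 ∧ t.maxM = H ∧ t.maxL = K} := by
  ext t
  rw [RTM.mem_famEEEE]
  constructor
  · rintro ⟨⟨⟨⟨⟨⟨h1, h2, h3⟩, _⟩, h4⟩, h5⟩, h6⟩, h7⟩
    exact ⟨⟨by exact_mod_cast h1, by exact_mod_cast h2, by exact_mod_cast h3⟩,
      by exact_mod_cast h4, by exact_mod_cast h5, by exact_mod_cast h6, by exact_mod_cast h7⟩
  · rintro ⟨⟨h1, h2, h3⟩, h4, h5, h6, h7⟩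
    refine ⟨⟨⟨⟨⟨⟨by exact_mod_cast h1, by exact_mod_cast h2, by exact_mod_cast h3⟩,
      ?_, ?_, ?_, ?_⟩, ?_⟩, ?_⟩, ?_⟩, ?_⟩ <;> simp [h4, h5, h6, h7]

theorem famEEEL_eq (N S M F H K : ℕ) :
    famEEEL (N : ℤ) (S : ℤ) (M : ℤ) (F : ℤ) 0 (H : ℤ) (K : ℤ) =
      {t : RTM | (t.vcount = N ∧ t.scount = S ∧ t.ecount = M) ∧
        t.maxV = F ∧ t.maxS = 0 ∧ t.maxM = H ∧ t.maxL ≤ K} := by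
  ext t
  rw [RTM.mem_famEEEL]
  constructor
  · rintro ⟨⟨⟨⟨⟨h1, h2, h3⟩, hb⟩, h4⟩, h5⟩, h6⟩
    exact ⟨⟨by exact_mod_cast h1, by exact_mod_cast h2, by exact_mod_cast h3⟩,
      by exact_mod_cast h4, by exact_mod_cast h5, by exact_mod_cast h6,
      by exact_mod_cast hb.2.2.2⟩
  · rintro ⟨⟨h1, h2, h3⟩, h4, h5, h6, h7⟩
    refine ⟨⟨⟨⟨⟨by exact_mod_cast h1, by exact_mod_cast h2, by exact_mod_cast h3⟩,
      ?_, ?_, ?_, ?_⟩, ?_⟩, ?_⟩, ?_⟩ <;> simp [h4, h5, h6] <;> exact_mod_cast h7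

theorem famEELL_eq (N S M F H K : ℕ) :
    famEELL (N : ℤ) (S : ℤ) (M : ℤ) (F : ℤ) 0 (H : ℤ) (K : ℤ) =
      {t : RTM | (t.vcount = N ∧ t.scount = S ∧ t.ecount = M) ∧
        t.maxV = F ∧ t.maxS = 0 ∧ t.maxM ≤ H ∧ t.maxL ≤ K} := by
  ext t
  rw [RTM.mem_famEELL]
  constructor
  · rintro ⟨⟨⟨⟨h1, h2, h3⟩, hb⟩, h4⟩, h5⟩
    exact ⟨⟨by exact_mod_cast h1, by exact_mod_cast h2, by exact_mod_cast h3⟩,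
      by exact_mod_cast h4, by exact_mod_cast h5, by exact_mod_cast hb.2.2.1,
      by exact_mod_cast hb.2.2.2⟩
  · rintro ⟨⟨h1, h2, h3⟩, h4, h5, h6, h7⟩
    refine ⟨⟨⟨⟨by exact_mod_cast h1, by exact_mod_cast h2, by exact_mod_cast h3⟩,
      ?_, ?_, ?_, ?_⟩, ?_⟩, ?_⟩
    · exact_mod_cast le_of_eq h4
    · exact_mod_cast le_of_eq h5
    · exact_mod_cast h6
    · exact_mod_cast h7
    · exact_mod_cast h4
    · exact_mod_cast h5

theorem famLLLL_eq (N S M F G H K : ℕ) :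
    famLLLL (N : ℤ) (S : ℤ) (M : ℤ) (F : ℤ) (G : ℤ) (H : ℤ) (K : ℤ) =
      {t : RTM | (t.vcount = N ∧ t.scount = S ∧ t.ecount = M) ∧
        t.maxV ≤ F ∧ t.maxS ≤ G ∧ t.maxM ≤ H ∧ t.maxL ≤ K} := by
  ext t
  rw [RTM.mem_famLLLL]
  constructor
  · rintro ⟨⟨h1, h2, h3⟩, h4, h5, h6, h7⟩
    exact ⟨⟨by exact_mod_cast h1, by exact_mod_cast h2, by exact_mod_cast h3⟩,
      by exact_mod_cast h4, by exact_mod_cast h5, by exact_mod_cast h6, by exact_mod_cast h7⟩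
  · rintro ⟨⟨h1, h2, h3⟩, h4, h5, h6, h7⟩
    exact ⟨⟨by exact_mod_cast h1, by exact_mod_cast h2, by exact_mod_cast h3⟩,
      by exact_mod_cast h4, by exact_mod_cast h5, by exact_mod_cast h6, by exact_mod_cast h7⟩
namespace RTM

theorem child_vcount_lt {t : RTM} {c : ℕ × RTM} (hc : c ∈ t.childm) :
    c.2.vcount + 1 ≤ t.vcount := by
  have h1 := Multiset.single_le_sum (s := t.childm.map (fun c => c.2.vcount))
    (fun _ _ => Nat.zero_le _) _ (Multiset.mem_map_of_mem _ hc)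
  have h2 := vcount_eq t
  omega

theorem child_scount_le {t : RTM} {c : ℕ × RTM} (hc : c ∈ t.childm) :
    c.2.scount ≤ t.scount := by
  have h1 := Multiset.single_le_sum (s := t.childm.map (fun c => c.2.scount))
    (fun _ _ => Nat.zero_le _) _ (Multiset.mem_map_of_mem _ hc)
  have h2 := scount_eq t
  omega

theorem child_ecount_le {t : RTM} {c : ℕ × RTM} (hc : c ∈ t.childm) :
    c.1 + c.2.ecount ≤ t.ecount := by
  have h1 := Multiset.single_le_sum (s := t.childm.map (fun c => c.1 + c.2.ecount))
    (fun _ _ => Nat.zero_le _) _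
    (Multiset.mem_map_of_mem (f := fun c : ℕ × RTM => c.1 + c.2.ecount) hc)
  change c.1 + c.2.ecount ≤ _ at h1
  have h2 := ecount_eq t
  omega

theorem loops_le_scount (t : RTM) : t.loops ≤ t.scount := by
  rw [scount_eq]; omega

theorem card_childm_le {t : RTM} : Multiset.card t.childm + 1 ≤ t.vcount := by
  have h2 := vcount_eq t
  have h1 : Multiset.card (t.childm.map (fun c => c.2.vcount)) • 1 ≤
      (t.childm.map (fun c => c.2.vcount)).sum :=
    Multiset.card_nsmul_le_sum (fun x hx => by
      obtain ⟨c, _, rfl⟩ := Multiset.mem_map.1 hx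
      exact one_le_vcount _)
  rw [Multiset.card_map, smul_eq_mul, mul_one] at h1
  omega

theorem finite_multisets {α : Type*} {F : Set α} (hF : F.Finite) (n : ℕ) :
    {M : Multiset α | Multiset.card M ≤ n ∧ ∀ a ∈ M, a ∈ F}.Finite := by
  classical
  induction n with
  | zero =>
    refine Set.Finite.subset (Set.finite_singleton 0) (fun M hM => ?_)
    have : Multiset.card M = 0 := Nat.le_zero.1 hM.1
    simpa using Multiset.card_eq_zero.1 this
  | succ n ih =>
    refine Set.Finite.subset (Set.Finite.insert 0 ((hF.prod ih).image
      (fun p : α × Multiset α => p.1 ::ₘ p.2))) (fun M hM => ?_)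
    rcases eq_or_ne M 0 with rfl | hne
    · exact Set.mem_insert _ _
    · obtain ⟨a, ha⟩ := Multiset.exists_mem_of_ne_zero hne
      refine Set.mem_insert_of_mem _ ⟨(a, M.erase a), ⟨hM.2 a ha, ?_, ?_⟩, Multiset.cons_erase ha⟩
      · show Multiset.card (M.erase a) ≤ n
        have := Multiset.card_erase_lt_of_mem ha
        have h2 := hM.1
        omega
      · exact fun b hb => hM.2 b (Multiset.mem_of_mem_erase hb)

theorem finite_G (n : ℕ) : ∀ (s m : ℕ),
    {t : RTM | t.vcount ≤ n ∧ t.scount ≤ s ∧ t.ecount ≤ m}.Finite := by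
  induction n with
  | zero =>
    intro s m
    refine Set.Finite.subset (Set.finite_empty) (fun t ht => ?_)
    have := one_le_vcount t
    have := ht.1
    omega
  | succ n ih =>
    intro s m
    refine Set.Finite.subset (((Set.finite_Iic s).prod (finite_multisets
      (((Set.finite_Iic m).prod (ih s m))) n)).image
      (fun p : ℕ × Multiset (ℕ × RTM) => mk p.1 p.2)) (fun t ht => ?_)
    obtain ⟨h1, h2, h3⟩ := ht
    refine ⟨(t.loops, t.childm), ⟨?_, ?_, ?_⟩, eta t⟩
    · exact le_trans (loops_le_scount t) h2
    · show Multiset.card t.childm ≤ n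
      have := card_childm_le (t := t); omega
    · intro c hc
      replace hc : c ∈ t.childm := hc
      refine ⟨le_trans (by omega) (le_trans (child_ecount_le hc) h3), ?_, ?_, ?_⟩
      · have := child_vcount_lt hc; omega
      · exact le_trans (child_scount_le hc) h2
      · exact le_trans (by omega) (le_trans (child_ecount_le hc) h3)

theorem finite_of_counts (N S M : ℕ) (A : Set RTM)
    (hA : A ⊆ {t : RTM | t.vcount = N ∧ t.scount = S ∧ t.ecount = M}) : A.Finite := by
  refine Set.Finite.subset (finite_G N S M) (fun t ht => ?_)
  obtain ⟨h1, h2, h3⟩ := hA ht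
  exact ⟨le_of_eq h1, le_of_eq h2, le_of_eq h3⟩

end RTM
namespace RTM

theorem sum_map_const {β : Type*} {s : Multiset β} {f : β → ℕ} {a : ℕ}
    (h : ∀ b ∈ s, f b = a) : (s.map f).sum = Multiset.card s * a := by
  induction s using Multiset.induction with
  | empty => simp
  | cons x t ih =>
    rw [Multiset.map_cons, Multiset.sum_cons, Multiset.card_cons,
      ih (fun b hb => h b (Multiset.mem_cons_of_mem hb)), h x (Multiset.mem_cons_self x t)]
    ring

theorem sup_map_le {β : Type*} {s : Multiset β} {f : β → ℕ} {a : ℕ}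
    (h : ∀ b ∈ s, f b ≤ a) : (s.map f).sup ≤ a :=
  Multiset.sup_le.2 (fun x hx => by
    obtain ⟨c, hc, rfl⟩ := Multiset.mem_map.1 hx
    exact h c hc)

theorem sup_map_const {β : Type*} {s : Multiset β} {f : β → ℕ} {a : ℕ}
    (h0 : s ≠ 0) (h : ∀ b ∈ s, f b = a) : (s.map f).sup = a := by
  refine le_antisymm (sup_map_le (fun b hb => le_of_eq (h b hb))) ?_
  obtain ⟨c, hc⟩ := Multiset.exists_mem_of_ne_zero h0
  rw [← h c hc]
  exact Multiset.le_sup (Multiset.mem_map_of_mem _ hc)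

/-- the property of being a "special" child: multiplicity `K`, subtree in `𝒫(F,0,H)` -/
def spec (F H K : ℕ) (c : ℕ × RTM) : Prop :=
  c.1 = K ∧ c.2.vcount = F ∧ c.2.scount = 0 ∧ c.2.ecount = H

instance (F H K : ℕ) : DecidablePred (spec F H K) := fun c => by unfold spec; infer_instance

/-- the decomposition map -/
noncomputable def phi (F H K : ℕ) (t : RTM) : Multiset RTM × RTM :=
  ((t.childm.filter (spec F H K)).map Prod.snd,
    mk t.loops (t.childm.filter (fun c => ¬ spec F H K c)))

/-- 𝒫(n,s,m) at the ℕ level -/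
def PN (n s m : ℕ) : Set RTM := {t | t.vcount = n ∧ t.scount = s ∧ t.ecount = m}

/-- size-`Y` multisets of members of `PN F 0 H` -/
def MS (F H Y : ℕ) : Set (Multiset RTM) :=
  {Q | Multiset.card Q = Y ∧ ∀ q ∈ Q, q ∈ PN F 0 H}

def Eset (N S M F H K : ℕ) : Set RTM :=
  {t | (t.vcount = N ∧ t.scount = S ∧ t.ecount = M) ∧
    t.maxV = F ∧ t.maxS = 0 ∧ t.maxM = H ∧ t.maxL = K}

def EY (N S M F H K Y : ℕ) : Set RTM :=
  {t ∈ Eset N S M F H K | Multiset.card (t.childm.filter (spec F H K)) = Y}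

def B1 (N2 S M2 F H K : ℕ) : Set RTM :=
  {t | (t.vcount = N2 ∧ t.scount = S ∧ t.ecount = M2) ∧
    t.maxV = F ∧ t.maxS = 0 ∧ t.maxM = H ∧ t.maxL ≤ min M2 (K - 1)}

def B2 (N2 S M2 F H : ℕ) : Set RTM :=
  {t | (t.vcount = N2 ∧ t.scount = S ∧ t.ecount = M2) ∧
    t.maxV = F ∧ t.maxS = 0 ∧ t.maxM ≤ min M2 (H - 1) ∧ t.maxL ≤ M2}

def B3 (N2 S M2 F : ℕ) : Set RTM :=
  {t | (t.vcount = N2 ∧ t.scount = S ∧ t.ecount = M2) ∧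
    t.maxV ≤ min (N2 - 1) (F - 1) ∧ t.maxS ≤ S ∧ t.maxM ≤ M2 ∧ t.maxL ≤ M2}

end RTM
namespace RTM

theorem sum_map_split (s : Multiset (ℕ × RTM)) (p : ℕ × RTM → Prop) [DecidablePred p]
    (f : ℕ × RTM → ℕ) :
    (s.map f).sum = ((s.filter p).map f).sum + ((s.filter (fun c => ¬ p c)).map f).sum := by
  conv_lhs => rw [← Multiset.filter_add_not p s]
  rw [Multiset.map_add, Multiset.sum_add]

section Bij

variable {S F H K Y N2 M2 : ℕ}

theorem phi_mapsTo (hH : 1 ≤ H) (hK : 1 ≤ K) (hY : 1 ≤ Y) :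
    Set.MapsTo (phi F H K) (EY (Y*F + N2) S (Y*(H+K) + M2) F H K Y)
      (MS F H Y ×ˢ (B1 N2 S M2 F H K ∪ B2 N2 S M2 F H ∪ B3 N2 S M2 F)) := by
  rintro t ⟨⟨⟨hv, hs, he⟩, hmv, hms, hmm, hml⟩, hcard⟩
  set Sp := t.childm.filter (spec F H K) with hSp
  set R := t.childm.filter (fun c => ¬ spec F H K c) with hR
  have hRsub : ∀ c ∈ R, c ∈ t.childm := fun c hc => Multiset.mem_of_mem_filter hc
  have hSpsub : ∀ c ∈ Sp, c ∈ t.childm := fun c hc => Multiset.mem_of_mem_filter hc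
  have hSpspec : ∀ c ∈ Sp, spec F H K c := fun c hc => Multiset.of_mem_filter hc
  have hRspec : ∀ c ∈ R, ¬ spec F H K c := fun c hc =>
    (Multiset.mem_filter.1 (show c ∈ t.childm.filter (fun c => ¬ spec F H K c) from hc)).2
  -- sums over the special part
  have hv_split := sum_map_split t.childm (spec F H K) (fun c => c.2.vcount)
  have hs_split := sum_map_split t.childm (spec F H K) (fun c => c.2.scount)
  have he_split := sum_map_split t.childm (spec F H K) (fun c => c.1 + c.2.ecount)
  rw [← hSp, ← hR] at hv_split hs_split he_split
  have hSp_v : ((Sp.map (fun c => c.2.vcount)).sum) = Y * F := by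
    rw [sum_map_const (fun c hc => (hSpspec c hc).2.1), hcard]
  have hSp_s : ((Sp.map (fun c => c.2.scount)).sum) = 0 := by
    rw [sum_map_const (a := 0) (fun c hc => (hSpspec c hc).2.2.1)]
    omega
  have hSp_e : ((Sp.map (fun c => c.1 + c.2.ecount)).sum) = Y * (H + K) := by
    rw [sum_map_const (a := K + H) (fun c hc => by
      rw [(hSpspec c hc).1, (hSpspec c hc).2.2.2]), hcard]
    ring
  set r := mk t.loops R with hr
  have hrl : r.loops = t.loops := rfl
  have hrc : r.childm = R := childm_mk _ _
  have hvt := vcount_eq t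
  have hst := scount_eq t
  have het := ecount_eq t
  -- counts of the residual
  have hrv : r.vcount = N2 := by
    have := vcount_eq r
    rw [hrc] at this
    omega
  have hrs : r.scount = S := by
    have := scount_eq r
    rw [hrc, hrl] at this
    omega
  have hre : r.ecount = M2 := by
    have := ecount_eq r
    rw [hrc] at this
    omega
  -- bounds on residual maxima
  have hrmv_le : r.maxV ≤ F := by
    rw [maxV_eq, hrc]
    exact sup_map_le (fun c hc => hmv ▸ vcount_child_le (hRsub c hc))
  have hfilter_sub : ∀ c ∈ R.filter (fun c => c.2.vcount = r.maxV), c ∈ t.childm :=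
    fun c hc => hRsub c (Multiset.mem_of_mem_filter hc)
  -- membership of the multiset part
  refine ⟨⟨?_, ?_⟩, ?_⟩
  · show Multiset.card (Sp.map Prod.snd) = Y
    rw [Multiset.card_map]; exact hcard
  · intro q hq
    obtain ⟨c, hc, rfl⟩ := Multiset.mem_map.1 hq
    exact ⟨(hSpspec c hc).2.1, (hSpspec c hc).2.2.1, (hSpspec c hc).2.2.2⟩
  -- membership of the residual
  show r ∈ _
  rcases eq_or_lt_of_le hrmv_le with hVF | hVF
  · -- maxV r = F
    have hrms : r.maxS = 0 := by
      rw [maxS_eq, hrc]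
      refine Nat.le_zero.1 (sup_map_le (fun c hc => ?_))
      have h1 : c ∈ t.childm := hRsub c (Multiset.mem_of_mem_filter hc)
      have h2 : c.2.vcount = t.maxV := by
        rw [hmv, ← hVF]; exact (Multiset.mem_filter.1 hc).2
      rw [← hms]
      exact scount_child_le h1 h2
    have hrmm_le : r.maxM ≤ H := by
      rw [maxM_eq, hrc]
      refine sup_map_le (fun c hc => ?_)
      have h1 : c ∈ t.childm := hRsub c (Multiset.mem_of_mem_filter hc)
      have h2 : c.2.vcount = t.maxV := by
        rw [hmv, ← hVF]; exact (Multiset.mem_filter.1 hc).2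
      rw [← hmm]
      exact ecount_child_le h1 h2
    rcases eq_or_lt_of_le hrmm_le with hMH | hMH
    · -- maxM r = H : lands in B1
      refine Or.inl (Or.inl ⟨⟨hrv, hrs, hre⟩, hVF, hrms, hMH, ?_⟩)
      refine le_min (hre ▸ maxL_le r) ?_
      rw [maxL_eq, hrc]
      refine sup_map_le (fun c hc => ?_)
      obtain ⟨hcR, hcv, hce⟩ := Multiset.mem_filter.1 hc
      have h1 : c ∈ t.childm := hRsub c hcR
      have h2 : c.2.vcount = t.maxV := by rw [hmv, ← hVF]; exact hcv
      have h3 : c.2.ecount = t.maxM := by rw [hmm, ← hMH]; exact hce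
      have h4 : c.1 ≤ K := hml ▸ mult_child_le h1 h2 h3
      have h5 : c.1 ≠ K := by
        intro hck
        refine hRspec c hcR ⟨hck, ?_, ?_, ?_⟩
        · rw [hcv, hVF]
        · have := scount_child_le h1 h2
          rw [hms] at this
          omega
        · rw [hce, hMH]
      omega
    · -- maxM r < H : lands in B2
      refine Or.inl (Or.inr ⟨⟨hrv, hrs, hre⟩, hVF, hrms, ?_, hre ▸ maxL_le r⟩)
      refine le_min (hre ▸ maxM_le r) ?_
      omega
  · -- maxV r < F : lands in B3
    refine Or.inr ⟨⟨hrv, hrs, hre⟩, ?_, hrs ▸ maxS_le r, hre ▸ maxM_le r, hre ▸ maxL_le r⟩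
    have h1 := maxV_le r
    refine le_min ?_ ?_ <;> omega

end Bij

end RTM
namespace RTM

section Bij2

variable {S F H K Y N2 M2 : ℕ}

theorem spec_filter_eq (F H K : ℕ) (u : RTM) :
    ((u.childm.filter (spec F H K)).map Prod.snd).map (fun q => (K, q)) =
      u.childm.filter (spec F H K) := by
  rw [Multiset.map_map]
  have h : (u.childm.filter (spec F H K)).map (fun c => ((fun q => (K, q)) ∘ Prod.snd) c)
      = (u.childm.filter (spec F H K)).map id :=
    Multiset.map_congr rfl (fun c hc => by
      have hcK : c.1 = K := (Multiset.mem_filter.1 hc).2.1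
      simp only [Function.comp, id_eq]
      exact Prod.ext hcK.symm rfl)
  rw [h, Multiset.map_id]

theorem phi_injective (F H K : ℕ) : Function.Injective (phi F H K) := by
  intro t t' h
  have h1 : (t.childm.filter (spec F H K)).map Prod.snd
      = (t'.childm.filter (spec F H K)).map Prod.snd := congrArg Prod.fst h
  have h2 : mk t.loops (t.childm.filter (fun c => ¬ spec F H K c))
      = mk t'.loops (t'.childm.filter (fun c => ¬ spec F H K c)) := congrArg Prod.snd h
  have hl : t.loops = t'.loops := by
    have := congrArg loops h2
    simpa using this
  have hR : t.childm.filter (fun c => ¬ spec F H K c)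
      = t'.childm.filter (fun c => ¬ spec F H K c) := by
    have := congrArg childm h2
    simpa [childm_mk] using this
  have hSp : t.childm.filter (spec F H K) = t'.childm.filter (spec F H K) := by
    rw [← spec_filter_eq F H K t, h1, spec_filter_eq F H K t']
  rw [eq_iff]
  refine ⟨hl, ?_⟩
  rw [← Multiset.filter_add_not (spec F H K) t.childm,
    ← Multiset.filter_add_not (spec F H K) t'.childm, hR, hSp]

theorem phi_surjOn (hH : 1 ≤ H) (hK : 1 ≤ K) (hF : 1 ≤ F) (hY : 1 ≤ Y) :
    Set.SurjOn (phi F H K) (EY (Y*F + N2) S (Y*(H+K) + M2) F H K Y)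
      (MS F H Y ×ˢ (B1 N2 S M2 F H K ∪ B2 N2 S M2 F H ∪ B3 N2 S M2 F)) := by
  rintro ⟨Q, r⟩ ⟨⟨hQcard, hQmem⟩, hr⟩
  replace hr : r ∈ B1 N2 S M2 F H K ∪ B2 N2 S M2 F H ∪ B3 N2 S M2 F := hr
  replace hQmem : ∀ q ∈ Q, q ∈ PN F 0 H := hQmem
  set A := Q.map (fun q => (K, q)) with hA
  set t := mk r.loops (A + r.childm) with ht
  have htl : t.loops = r.loops := rfl
  have htc : t.childm = A + r.childm := childm_mk _ _
  have hcounts : r.vcount = N2 ∧ r.scount = S ∧ r.ecount = M2 := by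
    rcases hr with (h | h) | h <;> exact h.1
  have hAspec : ∀ c ∈ A, spec F H K c := by
    intro c hc
    obtain ⟨q, hq, rfl⟩ := Multiset.mem_map.1 hc
    exact ⟨rfl, (hQmem q hq).1, (hQmem q hq).2.1, (hQmem q hq).2.2⟩
  have hAcard : Multiset.card A = Y := by rw [hA, Multiset.card_map, hQcard]
  have hAne : A ≠ 0 := by
    intro h0
    rw [h0] at hAcard
    simp at hAcard
    omega
  -- case facts about r's children
  have hc1 : ∀ c ∈ r.childm, c.2.vcount = F → c.2.scount = 0 := by
    intro c hc hcv
    rcases hr with (h | h) | h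
    · have := scount_child_le hc (by rw [h.2.1, hcv])
      rw [h.2.2.1] at this
      omega
    · have := scount_child_le hc (by rw [h.2.1, hcv])
      rw [h.2.2.1] at this
      omega
    · have := vcount_child_le hc
      have h2 := h.2.1
      rw [hcv] at this
      have := le_min_iff.1 h2
      omega
  have hc2 : ∀ c ∈ r.childm, c.2.vcount = F → c.2.ecount ≤ H := by
    intro c hc hcv
    rcases hr with (h | h) | h
    · have := ecount_child_le hc (by rw [h.2.1, hcv])
      rw [h.2.2.2.1] at this
      exact this
    · have := ecount_child_le hc (by rw [h.2.1, hcv])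
      have h2 := le_min_iff.1 h.2.2.2.1
      omega
    · have := vcount_child_le hc
      have h2 := le_min_iff.1 h.2.1
      rw [hcv] at this
      omega
  have hc3 : ∀ c ∈ r.childm, c.2.vcount = F → c.2.ecount = H → c.1 ≤ K - 1 := by
    intro c hc hcv hce
    rcases hr with (h | h) | h
    · have := mult_child_le hc (by rw [h.2.1, hcv]) (by rw [h.2.2.2.1, hce])
      have h2 := le_min_iff.1 h.2.2.2.2
      omega
    · have := ecount_child_le hc (by rw [h.2.1, hcv])
      have h2 := le_min_iff.1 h.2.2.2.1
      rw [hce] at this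
      omega
    · have := vcount_child_le hc
      have h2 := le_min_iff.1 h.2.1
      rw [hcv] at this
      omega
  have hc4 : r.maxV ≤ F := by
    rcases hr with (h | h) | h
    · exact le_of_eq h.2.1
    · exact le_of_eq h.2.1
    · have h2 := le_min_iff.1 h.2.1
      omega
  have hrnspec : ∀ c ∈ r.childm, ¬ spec F H K c := by
    rintro c hc ⟨hk, hv, hs, he⟩
    have := hc3 c hc hv he
    omega
  -- the two filters
  have hfs : t.childm.filter (spec F H K) = A := by
    rw [htc, Multiset.filter_add, Multiset.filter_eq_self.2 hAspec,
      Multiset.filter_eq_nil.2 hrnspec, add_zero]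
  have hfn : t.childm.filter (fun c => ¬ spec F H K c) = r.childm := by
    rw [htc, Multiset.filter_add, Multiset.filter_eq_nil.2 (fun c hc => not_not.2 (hAspec c hc)),
      Multiset.filter_eq_self.2 hrnspec, zero_add]
  -- sums over A
  have hA_v : ((A.map (fun c => c.2.vcount)).sum) = Y * F := by
    rw [sum_map_const (a := F) (fun c hc => (hAspec c hc).2.1), hAcard]
  have hA_s : ((A.map (fun c => c.2.scount)).sum) = 0 := by
    rw [sum_map_const (a := 0) (fun c hc => (hAspec c hc).2.2.1)]
    omega
  have hA_e : ((A.map (fun c => c.1 + c.2.ecount)).sum) = Y * (H + K) := by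
    rw [sum_map_const (a := K + H) (fun c hc => by
      rw [(hAspec c hc).1, (hAspec c hc).2.2.2]), hAcard]
    ring
  -- counts of t
  have hvt : t.vcount = Y*F + N2 := by
    have h1 := vcount_eq t
    have h2 := vcount_eq r
    rw [htc, Multiset.map_add, Multiset.sum_add] at h1
    omega
  have hst : t.scount = S := by
    have h1 := scount_eq t
    have h2 := scount_eq r
    rw [htc, Multiset.map_add, Multiset.sum_add, htl] at h1
    omega
  have het : t.ecount = Y*(H+K) + M2 := by
    have h1 := ecount_eq t
    have h2 := ecount_eq r
    rw [htc, Multiset.map_add, Multiset.sum_add] at h1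
    omega
  -- maxima of t
  have hmvt : t.maxV = F := by
    rw [maxV_eq, htc, Multiset.map_add, Multiset.sup_add,
      sup_map_const hAne (fun c hc => (hAspec c hc).2.1)]
    have : (r.childm.map (fun c => c.2.vcount)).sup = r.maxV := (maxV_eq r).symm
    rw [this]
    exact sup_eq_left.2 hc4
  have hmst : t.maxS = 0 := by
    rw [maxS_eq, hmvt, htc, Multiset.filter_add, Multiset.map_add, Multiset.sup_add]
    refine Nat.le_zero.1 (sup_le_iff.2 ⟨?_, ?_⟩)
    · refine sup_map_le (fun c hc => ?_)
      exact le_of_eq ((hAspec c (Multiset.mem_of_mem_filter hc)).2.2.1)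
    · refine sup_map_le (fun c hc => ?_)
      obtain ⟨hcr, hcv⟩ := Multiset.mem_filter.1 hc
      exact le_of_eq (hc1 c hcr hcv)
  have hmmt : t.maxM = H := by
    rw [maxM_eq, hmvt, htc, Multiset.filter_add, Multiset.map_add, Multiset.sup_add]
    have hAf : A.filter (fun c => c.2.vcount = F) = A :=
      Multiset.filter_eq_self.2 (fun c hc => (hAspec c hc).2.1)
    rw [hAf, sup_map_const hAne (fun c hc => (hAspec c hc).2.2.2)]
    refine sup_eq_left.2 (sup_map_le (fun c hc => ?_))
    obtain ⟨hcr, hcv⟩ := Multiset.mem_filter.1 hc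
    exact hc2 c hcr hcv
  have hmlt : t.maxL = K := by
    rw [maxL_eq, hmvt, hmmt, htc, Multiset.filter_add, Multiset.map_add, Multiset.sup_add]
    have hAf : A.filter (fun c => c.2.vcount = F ∧ c.2.ecount = H) = A :=
      Multiset.filter_eq_self.2 (fun c hc => ⟨(hAspec c hc).2.1, (hAspec c hc).2.2.2⟩)
    rw [hAf, sup_map_const hAne (fun c hc => (hAspec c hc).1)]
    refine sup_eq_left.2 (sup_map_le (fun c hc => ?_))
    obtain ⟨hcr, hcv, hce⟩ := Multiset.mem_filter.1 hc
    have := hc3 c hcr hcv hce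
    omega
  refine ⟨t, ⟨⟨⟨hvt, hst, het⟩, hmvt, hmst, hmmt, hmlt⟩, ?_⟩, ?_⟩
  · rw [hfs]; exact hAcard
  · show (_, _) = (Q, r)
    refine Prod.ext ?_ ?_
    · show (t.childm.filter (spec F H K)).map Prod.snd = Q
      rw [hfs, hA, Multiset.map_map]
      exact Multiset.map_id _
    · show mk t.loops (t.childm.filter (fun c => ¬ spec F H K c)) = r
      rw [hfn, htl]
      exact eta r

end Bij2

end RTM
namespace RTM

theorem ncard_prod {α β : Type*} (A : Set α) (B : Set β) :
    (A ×ˢ B).ncard = A.ncard * B.ncard := by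
  rw [← Nat.card_coe_set_eq, ← Nat.card_coe_set_eq, ← Nat.card_coe_set_eq,
    Nat.card_congr (Equiv.Set.prod A B), Nat.card_prod]

theorem PN_finite (n s m : ℕ) : (PN n s m).Finite :=
  finite_of_counts n s m _ (fun _ ht => ht)

theorem ncard_MS (F H Y : ℕ) :
    (MS F H Y).ncard = Nat.multichoose ((PN F 0 H).ncard) Y := by
  classical
  have hfin := PN_finite F 0 H
  set s := hfin.toFinset with hs
  have himg : MS F H Y = (fun (q : Sym {x // x ∈ s} Y) => q.1.map Subtype.val) '' Set.univ := by
    ext Q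
    constructor
    · rintro ⟨hcard, hmem⟩
      refine ⟨⟨Q.attach.map (fun x => (⟨x.1, ?_⟩ : {x // x ∈ s})), ?_⟩, Set.mem_univ _, ?_⟩
      · simp only [hs, Set.Finite.mem_toFinset]
        exact hmem x.1 x.2
      · rw [Multiset.card_map, Multiset.card_attach]
        exact hcard
      · show Multiset.map _ (Multiset.map _ Q.attach) = Q
        rw [Multiset.map_map]
        exact (Multiset.map_congr rfl (fun x _ => rfl)).trans (Multiset.attach_map_val Q)
    · rintro ⟨q, -, rfl⟩
      refine ⟨by rw [Multiset.card_map]; exact q.2, ?_⟩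
      intro a ha
      obtain ⟨b, hb, rfl⟩ := Multiset.mem_map.1 ha
      have := b.2
      simp only [hs, Set.Finite.mem_toFinset] at this
      exact this
  rw [himg, Set.ncard_image_of_injOn, Set.ncard_univ, Nat.card_eq_fintype_card,
    Sym.card_sym_eq_multichoose, Fintype.card_coe, Set.ncard_eq_toFinset_card _ hfin]
  intro q1 _ q2 _ h
  exact Subtype.ext (Multiset.map_injective Subtype.val_injective h)

section Count

variable {S F H K Y N2 M2 : ℕ}

theorem Bsets_finite : (B1 N2 S M2 F H K).Finite ∧ (B2 N2 S M2 F H).Finite ∧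
    (B3 N2 S M2 F).Finite :=
  ⟨finite_of_counts N2 S M2 _ (fun _ ht => ht.1),
   finite_of_counts N2 S M2 _ (fun _ ht => ht.1),
   finite_of_counts N2 S M2 _ (fun _ ht => ht.1)⟩

theorem ncard_Bunion (hH : 1 ≤ H) (hF : 1 ≤ F) :
    (B1 N2 S M2 F H K ∪ B2 N2 S M2 F H ∪ B3 N2 S M2 F).ncard =
      (B1 N2 S M2 F H K).ncard + (B2 N2 S M2 F H).ncard + (B3 N2 S M2 F).ncard := by
  obtain ⟨hf1, hf2, hf3⟩ := Bsets_finite (N2 := N2) (S := S) (M2 := M2) (F := F) (H := H) (K := K)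
  have hd12 : Disjoint (B1 N2 S M2 F H K) (B2 N2 S M2 F H) := by
    rw [Set.disjoint_left]
    rintro t ⟨_, _, _, hm, _⟩ ⟨_, _, _, hm', _⟩
    have := le_min_iff.1 hm'
    omega
  have hd13 : Disjoint (B1 N2 S M2 F H K ∪ B2 N2 S M2 F H) (B3 N2 S M2 F) := by
    rw [Set.disjoint_left]
    rintro t ht ⟨_, hv', _⟩
    have h2 := le_min_iff.1 hv'
    rcases ht with ⟨_, hv, _⟩ | ⟨_, hv, _⟩ <;> omega
  rw [Set.ncard_union_eq hd13 (hf1.union hf2) hf3, Set.ncard_union_eq hd12 hf1 hf2]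

theorem ncard_EY (hH : 1 ≤ H) (hK : 1 ≤ K) (hF : 1 ≤ F) (hY : 1 ≤ Y) :
    (EY (Y*F + N2) S (Y*(H+K) + M2) F H K Y).ncard =
      Nat.multichoose ((PN F 0 H).ncard) Y *
        ((B1 N2 S M2 F H K).ncard + (B2 N2 S M2 F H).ncard + (B3 N2 S M2 F).ncard) := by
  have himg : phi F H K '' (EY (Y*F + N2) S (Y*(H+K) + M2) F H K Y) =
      MS F H Y ×ˢ (B1 N2 S M2 F H K ∪ B2 N2 S M2 F H ∪ B3 N2 S M2 F) :=
    subset_antisymm (Set.mapsTo_iff_image_subset.1 (phi_mapsTo hH hK hY)) (phi_surjOn hH hK hF hY)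
  have h1 := Set.ncard_image_of_injOn ((phi_injective F H K).injOn
    (s := EY (Y*F + N2) S (Y*(H+K) + M2) F H K Y))
  rw [himg] at h1
  rw [← h1, ncard_prod, ncard_MS, ncard_Bunion hH hF]

end Count

end RTM
namespace RTM

theorem spec_child_count {N S M F H K : ℕ} (hK : 1 ≤ K) {t : RTM}
    (ht : t ∈ Eset N S M F H K) :
    1 ≤ Multiset.card (t.childm.filter (spec F H K)) ∧
    Multiset.card (t.childm.filter (spec F H K)) * F + 1 ≤ N ∧
    Multiset.card (t.childm.filter (spec F H K)) * (H + K) ≤ M := by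
  obtain ⟨⟨hv, hs, he⟩, hmv, hms, hmm, hml⟩ := ht
  set Sp := t.childm.filter (spec F H K) with hSp
  have hSpspec : ∀ c ∈ Sp, spec F H K c := fun c hc => Multiset.of_mem_filter hc
  have h1 : 1 ≤ Multiset.card Sp := by
    obtain ⟨c, hc, hcv, hce, hck⟩ := attain_maxL (t := t) (by rw [hml]; omega)
    have hcs : spec F H K c := by
      refine ⟨by rw [hck, hml], by rw [hcv, hmv], ?_, by rw [hce, hmm]⟩
      have := scount_child_le hc hcv
      rw [hms] at this
      omega
    have : c ∈ Sp := Multiset.mem_filter.2 ⟨hc, hcs⟩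
    have := Multiset.card_pos_iff_exists_mem.2 ⟨c, this⟩
    omega
  have hv_split := sum_map_split t.childm (spec F H K) (fun c => c.2.vcount)
  have he_split := sum_map_split t.childm (spec F H K) (fun c => c.1 + c.2.ecount)
  rw [← hSp] at hv_split he_split
  have hSp_v : ((Sp.map (fun c => c.2.vcount)).sum) = Multiset.card Sp * F :=
    sum_map_const (fun c hc => (hSpspec c hc).2.1)
  have hSp_e : ((Sp.map (fun c => c.1 + c.2.ecount)).sum) = Multiset.card Sp * (K + H) :=
    sum_map_const (fun c hc => by rw [(hSpspec c hc).1, (hSpspec c hc).2.2.2])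
  have hvt := vcount_eq t
  have het := ecount_eq t
  have harith : Multiset.card Sp * (K + H) = Multiset.card Sp * (H + K) := by ring
  refine ⟨h1, by omega, by omega⟩

theorem famLLLL_PN (F H : ℕ) (hF : 1 ≤ F) :
    famLLLL (F : ℤ) 0 (H : ℤ) ((F : ℤ) - 1) 0 (H : ℤ) (H : ℤ) = PN F 0 H := by
  ext t
  rw [mem_famLLLL]
  constructor
  · rintro ⟨⟨h1, h2, h3⟩, -⟩
    exact ⟨by exact_mod_cast h1, by exact_mod_cast h2, by exact_mod_cast h3⟩
  · rintro ⟨h1, h2, h3⟩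
    refine ⟨⟨by exact_mod_cast h1, by exact_mod_cast h2, by exact_mod_cast h3⟩, ?_, ?_, ?_, ?_⟩
    · have := maxV_le t
      rw [h1] at this
      push_cast
      omega
    · have := maxS_le t
      rw [h2] at this
      exact_mod_cast this
    · have := maxM_le t
      rw [h3] at this
      exact_mod_cast this
    · have := maxL_le t
      rw [h3] at this
      exact_mod_cast this

end RTM
/-- Paper's Lemma 2(vii): recursion for `p(n,s,m,f=,0=,h=,k=)` with `h, k ≥ 1`. -/
theorem lemma2_vii (n s m f h k : ℤ) (hn : 3 ≤ n) (hf : 1 ≤ f) (hh : 1 ≤ h) (hk : 1 ≤ k)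
    (hs : 0 ≤ s) (hm : 0 ≤ m) (hmhk : h + k ≤ m) :
    pEEEE n s m f 0 h k =
      ∑ y ∈ Yset n s m f 0 h k,
        w f 0 h y.toNat *
          (pEEEL (n - y*f) s (m - y*(h+k)) f 0 h (min (m - y*(h+k)) (k-1)) +
           pEELL (n - y*f) s (m - y*(h+k)) f 0 (min (m - y*(h+k)) (h-1)) (m - y*(h+k)) +
           pLLLL (n - y*f) s (m - y*(h+k)) (min (n - y*f - 1) (f-1)) s (m - y*(h+k)) (m - y*(h+k))) := by
  classical
  obtain ⟨N, rfl⟩ : ∃ N : ℕ, n = (N : ℤ) := ⟨n.toNat, (Int.toNat_of_nonneg (by omega)).symm⟩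
  obtain ⟨S, rfl⟩ : ∃ S : ℕ, s = (S : ℤ) := ⟨s.toNat, (Int.toNat_of_nonneg (by omega)).symm⟩
  obtain ⟨M, rfl⟩ : ∃ M : ℕ, m = (M : ℤ) := ⟨m.toNat, (Int.toNat_of_nonneg (by omega)).symm⟩
  obtain ⟨F, rfl⟩ : ∃ F : ℕ, f = (F : ℤ) := ⟨f.toNat, (Int.toNat_of_nonneg (by omega)).symm⟩
  obtain ⟨H, rfl⟩ : ∃ H : ℕ, h = (H : ℤ) := ⟨h.toNat, (Int.toNat_of_nonneg (by omega)).symm⟩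
  obtain ⟨K, rfl⟩ : ∃ K : ℕ, k = (K : ℤ) := ⟨k.toNat, (Int.toNat_of_nonneg (by omega)).symm⟩
  have hN : 3 ≤ N := by exact_mod_cast hn
  have hF : 1 ≤ F := by exact_mod_cast hf
  have hH : 1 ≤ H := by exact_mod_cast hh
  have hK : 1 ≤ K := by exact_mod_cast hk
  have hF0 : (0 : ℤ) < (F : ℤ) := by exact_mod_cast hF
  have hHK0 : (0 : ℤ) < (H : ℤ) + (K : ℤ) := by push_cast; omega
  have hE : (RTM.Eset N S M F H K).Finite :=
    RTM.finite_of_counts N S M _ (fun _ ht => ht.1)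
  have hLHS : pEEEE (N : ℤ) (S : ℤ) (M : ℤ) (F : ℤ) 0 (H : ℤ) (K : ℤ) =
      (RTM.Eset N S M F H K).ncard := by
    rw [pEEEE, famEEEE_eq]
    rfl
  have hfiber : ∀ t ∈ hE.toFinset,
      ((Multiset.card (t.childm.filter (RTM.spec F H K)) : ℤ)) ∈
        Yset (N : ℤ) (S : ℤ) (M : ℤ) (F : ℤ) 0 (H : ℤ) (K : ℤ) := by
    intro t ht
    rw [Set.Finite.mem_toFinset] at ht
    obtain ⟨h1, h2, h3⟩ := RTM.spec_child_count hK ht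
    rw [Yset, Finset.mem_filter, Finset.mem_Icc]
    refine ⟨⟨by exact_mod_cast h1, ?_⟩, fun habs => absurd habs (by omega), fun _ => ?_⟩
    · rw [Int.le_ediv_iff_mul_le hF0]
      have : ((Multiset.card (t.childm.filter (RTM.spec F H K)) * F : ℕ) : ℤ) ≤ (N : ℤ) - 1 := by
        push_cast at h2 ⊢
        omega
      push_cast at this ⊢
      omega
    · rw [Int.le_ediv_iff_mul_le hHK0]
      have : ((Multiset.card (t.childm.filter (RTM.spec F H K)) * (H + K) : ℕ) : ℤ) ≤ (M : ℤ) := by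
        exact_mod_cast h3
      push_cast at this ⊢
      omega
  have hmain := Finset.card_eq_sum_card_fiberwise hfiber
  rw [hLHS, Set.ncard_eq_toFinset_card _ hE, hmain]
  refine Finset.sum_congr rfl (fun y hy => ?_)
  -- unpack the conditions defining `Yset`
  rw [Yset, Finset.mem_filter, Finset.mem_Icc] at hy
  obtain ⟨⟨hy1, hy2⟩, -, hy3⟩ := hy
  replace hy3 := hy3 (by push_cast; omega)
  rw [Int.le_ediv_iff_mul_le hF0] at hy2
  rw [Int.le_ediv_iff_mul_le hHK0] at hy3
  set Y := y.toNat with hYdef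
  have hyY : (Y : ℤ) = y := Int.toNat_of_nonneg (by omega)
  have hY1 : 1 ≤ Y := by omega
  rw [← hyY] at hy2 hy3
  have hN1 : Y * F + 1 ≤ N := by
    have h2 : ((Y * F : ℕ) : ℤ) ≤ (N : ℤ) - 1 := by push_cast; exact hy2
    omega
  have hM1 : Y * (H + K) ≤ M := by
    have h2 : ((Y * (H + K) : ℕ) : ℤ) ≤ (M : ℤ) := by push_cast; push_cast at hy3; omega
    omega
  set N2 := N - Y * F with hN2def
  set M2 := M - Y * (H + K) with hM2def
  have hNN : Y * F + N2 = N := by omega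
  have hMM : Y * (H + K) + M2 = M := by omega
  -- the fiber is `EY`
  have hfib : (hE.toFinset.filter
      (fun t => ((Multiset.card (t.childm.filter (RTM.spec F H K)) : ℤ)) = y)).card =
      (RTM.EY N S M F H K Y).ncard := by
    have hset : ↑(hE.toFinset.filter
        (fun t => ((Multiset.card (t.childm.filter (RTM.spec F H K)) : ℤ)) = y)) =
        RTM.EY N S M F H K Y := by
      ext t
      rw [Finset.coe_filter, Set.mem_setOf_eq, Set.Finite.mem_toFinset]
      constructor
      · rintro ⟨h1, h2⟩
        exact ⟨h1, by exact_mod_cast hyY ▸ h2⟩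
      · rintro ⟨h1, h2⟩
        exact ⟨h1, by rw [h2]; exact hyY⟩
    rw [← hset, Set.ncard_coe_finset]
  rw [hfib]
  have hEYcount : (RTM.EY N S M F H K Y).ncard =
      Nat.multichoose ((RTM.PN F 0 H).ncard) Y *
        ((RTM.B1 N2 S M2 F H K).ncard + (RTM.B2 N2 S M2 F H).ncard +
          (RTM.B3 N2 S M2 F).ncard) := by
    rw [← hNN, ← hMM]
    exact RTM.ncard_EY hH hK hF hY1
  rw [hEYcount]
  -- identify the factors
  have hw : w (F : ℤ) 0 (H : ℤ) Y = Nat.multichoose ((RTM.PN F 0 H).ncard) Y := by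
    rw [w, pLLLL, RTM.famLLLL_PN F H hF, Nat.multichoose_eq]
  have e1 : (N : ℤ) - y * (F : ℤ) = ((N2 : ℕ) : ℤ) := by
    rw [← hyY, ← hNN]; push_cast; ring
  have e2 : (M : ℤ) - y * ((H : ℤ) + (K : ℤ)) = ((M2 : ℕ) : ℤ) := by
    rw [← hyY, ← hMM]; push_cast; ring
  have hN2pos : 1 ≤ N2 := by omega
  have e3 : min ((M : ℤ) - y * ((H : ℤ) + (K : ℤ))) ((K : ℤ) - 1) = ((min M2 (K - 1) : ℕ) : ℤ) := by
    rw [e2, Nat.cast_min, Nat.cast_sub hK, Nat.cast_one]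
  have e4 : min ((M : ℤ) - y * ((H : ℤ) + (K : ℤ))) ((H : ℤ) - 1) = ((min M2 (H - 1) : ℕ) : ℤ) := by
    rw [e2, Nat.cast_min, Nat.cast_sub hH, Nat.cast_one]
  have e5 : min ((N : ℤ) - y * (F : ℤ) - 1) ((F : ℤ) - 1) = ((min (N2 - 1) (F - 1) : ℕ) : ℤ) := by
    rw [e1, Nat.cast_min, Nat.cast_sub hN2pos, Nat.cast_sub hF, Nat.cast_one]
  have hp1 : pEEEL ((N : ℤ) - y * (F : ℤ)) (S : ℤ) ((M : ℤ) - y * ((H : ℤ) + (K : ℤ)))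
      (F : ℤ) 0 (H : ℤ) (min ((M : ℤ) - y * ((H : ℤ) + (K : ℤ))) ((K : ℤ) - 1)) =
      (RTM.B1 N2 S M2 F H K).ncard := by
    rw [e3, e1, e2, pEEEL, famEEEL_eq]
    rfl
  have hp2 : pEELL ((N : ℤ) - y * (F : ℤ)) (S : ℤ) ((M : ℤ) - y * ((H : ℤ) + (K : ℤ)))
      (F : ℤ) 0 (min ((M : ℤ) - y * ((H : ℤ) + (K : ℤ))) ((H : ℤ) - 1))
      ((M : ℤ) - y * ((H : ℤ) + (K : ℤ))) = (RTM.B2 N2 S M2 F H).ncard := by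
    rw [e4, e1, e2, pEELL, famEELL_eq]
    rfl
  have hp3 : pLLLL ((N : ℤ) - y * (F : ℤ)) (S : ℤ) ((M : ℤ) - y * ((H : ℤ) + (K : ℤ)))
      (min ((N : ℤ) - y * (F : ℤ) - 1) ((F : ℤ) - 1)) (S : ℤ)
      ((M : ℤ) - y * ((H : ℤ) + (K : ℤ))) ((M : ℤ) - y * ((H : ℤ) + (K : ℤ))) =
      (RTM.B3 N2 S M2 F).ncard := by
    rw [e5, e1, e2, pLLLL, famLLLL_eq]
    rfl
  rw [hp1, hp2, hp3, hw]
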